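/- arXiv:0904.2918 — 2 statements merged into one kernel-verified Lean document; each statement's English description precedes it below -/
import Mathlib

section
/- Fix a nonnegative integer ℓ and define N(a,b,c) ∈ {0,1} by: N(a,b,c) = 1 iff a,b,c ≤ ℓ, a+b+c is even, |a-b| ≤ c ≤ a+b, and a+b+c ≤ 2ℓ; else 0. Let c(x) = x²/2 + x. Suppose λ₁,λ₂,λ₃,λ₄ are nonnegative integers with λ₁+λ₂+λ₃+λ₄ even, each λ_i ≤ ℓ, and λ₁+λ₂+λ₃+λ₄ ≤ 2ℓ. Then, with r = ∑_{μ=0}^{ℓ} N(λ₁,λ₂,μ)·N(μ,λ₃,λ₄), one has r·(c(λ₁)+c(λ₂)+c(λ₃)+c(λ₄)) = ∑_{μ=0}^{ℓ} c(μ)·( N(λ₁,λ₂,μ)N(λ₃,λ₄,μ) + N(λ₁,λ₃,μ)N(λ₂,λ₄,μ) + N(λ₁,λ₄,μ)N(λ₂,λ₃,μ) ). -/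
open Finset

/-- The rank of the 3-point level-`ℓ` conformal block for `sl₂`. -/
def slTwoRank (ℓ a b c : ℕ) : ℕ :=
  if a ≤ ℓ ∧ b ≤ ℓ ∧ c ≤ ℓ ∧ Even (a + b + c) ∧
      ((a : ℤ) - (b : ℤ)).natAbs ≤ c ∧ c ≤ a + b ∧ a + b + c ≤ 2 * ℓ
  then 1 else 0

/-- The normalized Casimir eigenvalue `c(x) = x²/2 + x` for `sl₂`. -/
def casimir (x : ℕ) : ℚ := (x : ℚ) ^ 2 / 2 + (x : ℚ)

/-- Lower end of the fusion interval for the pairing `(a b | c d)`. -/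
def cbLo (a b c d : ℕ) : ℕ := max ((a - b) + (b - a)) ((c - d) + (d - c))

/-- Upper end of the fusion interval for the pairing `(a b | c d)`. -/
def cbHi (a b c d : ℕ) : ℕ := min (a + b) (c + d)

/-- Number of admissible intermediate weights for the pairing `(a b | c d)`. -/
def cbCnt (a b c d : ℕ) : ℕ := (cbHi a b c d + 2 - cbLo a b c d) / 2

lemma cbLo_swapL (a b c d : ℕ) : cbLo b a c d = cbLo a b c d := by
  unfold cbLo; rw [Nat.add_comm (b - a) (a - b)]

lemma cbLo_swapR (a b c d : ℕ) : cbLo a b d c = cbLo a b c d := by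
  unfold cbLo; rw [Nat.add_comm (d - c) (c - d)]

lemma cbLo_pair (a b c d : ℕ) : cbLo c d a b = cbLo a b c d := by
  unfold cbLo; exact max_comm _ _

lemma cbHi_swapL (a b c d : ℕ) : cbHi b a c d = cbHi a b c d := by
  unfold cbHi; rw [Nat.add_comm b a]

lemma cbHi_swapR (a b c d : ℕ) : cbHi a b d c = cbHi a b c d := by
  unfold cbHi; rw [Nat.add_comm d c]

lemma cbHi_pair (a b c d : ℕ) : cbHi c d a b = cbHi a b c d := by
  unfold cbHi; exact min_comm _ _

lemma cbCnt_congr {a b c d a' b' c' d' : ℕ} (hH : cbHi a' b' c' d' = cbHi a b c d)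
    (hL : cbLo a' b' c' d' = cbLo a b c d) : cbCnt a' b' c' d' = cbCnt a b c d := by
  unfold cbCnt; rw [hH, hL]

/-- All the combinatorial facts we need about the three fusion intervals. -/
def Bundle (a b c d : ℕ) : Prop :=
  cbCnt a b c d = cbCnt a c b d ∧ cbCnt a b c d = cbCnt a d b c ∧
  ∀ m, cbCnt a b c d = m + 1 →
    cbHi a b c d = cbLo a b c d + 2 * m ∧ cbHi a c b d = cbLo a c b d + 2 * m ∧
    cbHi a d b c = cbLo a d b c + 2 * m ∧
    cbHi a b c d + cbHi a c b d + cbHi a d b c = a + b + c + d + 2 * m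

set_option maxHeartbeats 1600000 in
lemma bundle_core (w x y z : ℕ) (h1 : w ≤ x) (h2 : x ≤ y) (h3 : y ≤ z)
    (hev : (w + x + y + z) % 2 = 0) : Bundle w x y z := by
  have e12h : cbHi w x y z = w + x := min_eq_left (by omega)
  have e13h : cbHi w y x z = w + y := min_eq_left (by omega)
  have e12l : cbLo w x y z = max (x - w) (z - y) := by
    unfold cbLo
    rw [Nat.sub_eq_zero_of_le h1, Nat.sub_eq_zero_of_le h3, Nat.zero_add, Nat.zero_add]
  have e13l : cbLo w y x z = max (y - w) (z - x) := by
    unfold cbLo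
    rw [Nat.sub_eq_zero_of_le (h1.trans h2), Nat.sub_eq_zero_of_le (h2.trans h3),
      Nat.zero_add, Nat.zero_add]
  have e14l : cbLo w z x y = z - w := by
    unfold cbLo
    rw [Nat.sub_eq_zero_of_le (h1.trans (h2.trans h3)), Nat.sub_eq_zero_of_le h2,
      Nat.zero_add, Nat.zero_add]
    exact max_eq_left (by omega)
  unfold Bundle
  rcases le_total (x + y) (w + z) with hc | hc
  · have e14h : cbHi w z x y = x + y := min_eq_right hc
    have l12 : cbLo w x y z = z - y := by rw [e12l]; exact max_eq_right (by omega)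
    have l13 : cbLo w y x z = z - x := by rw [e13l]; exact max_eq_right (by omega)
    simp only [cbCnt, e12h, e13h, e14h, l12, l13, e14l]
    refine ⟨by omega, by omega, fun m hm => ?_⟩
    have h2m : w + x = (z - y) + 2 * m := by omega
    exact ⟨by omega, by omega, by omega, by omega⟩
  · have e14h : cbHi w z x y = w + z := min_eq_left hc
    have l12 : cbLo w x y z = x - w := by rw [e12l]; exact max_eq_left (by omega)
    have l13 : cbLo w y x z = y - w := by rw [e13l]; exact max_eq_left (by omega)
    simp only [cbCnt, e12h, e13h, e14h, l12, l13, e14l]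
    refine ⟨by omega, by omega, fun m hm => ?_⟩
    have h2m : m = w := by omega
    exact ⟨by omega, by omega, by omega, by omega⟩

lemma bundle_swapL (a b c d : ℕ) (h : Bundle b a c d) : Bundle a b c d := by
  obtain ⟨B1, B2, B3⟩ := h
  have eH1 : cbHi b a c d = cbHi a b c d := cbHi_swapL a b c d
  have eL1 : cbLo b a c d = cbLo a b c d := cbLo_swapL a b c d
  have eC1 : cbCnt b a c d = cbCnt a b c d := cbCnt_congr eH1 eL1
  have eH2 : cbHi b c a d = cbHi a d b c := cbHi_pair a d b c
  have eL2 : cbLo b c a d = cbLo a d b c := cbLo_pair a d b c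
  have eC2 : cbCnt b c a d = cbCnt a d b c := cbCnt_congr eH2 eL2
  have eH3 : cbHi b d a c = cbHi a c b d := cbHi_pair a c b d
  have eL3 : cbLo b d a c = cbLo a c b d := cbLo_pair a c b d
  have eC3 : cbCnt b d a c = cbCnt a c b d := cbCnt_congr eH3 eL3
  refine ⟨by omega, by omega, fun m hm => ?_⟩
  obtain ⟨f1, f2, f3, f4⟩ := B3 m (by omega)
  exact ⟨by omega, by omega, by omega, by omega⟩

lemma bundle_swapR (a b c d : ℕ) (h : Bundle a b d c) : Bundle a b c d := by
  obtain ⟨B1, B2, B3⟩ := h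
  have eH1 : cbHi a b d c = cbHi a b c d := cbHi_swapR a b c d
  have eL1 : cbLo a b d c = cbLo a b c d := cbLo_swapR a b c d
  have eC1 : cbCnt a b d c = cbCnt a b c d := cbCnt_congr eH1 eL1
  refine ⟨by omega, by omega, fun m hm => ?_⟩
  obtain ⟨f1, f2, f3, f4⟩ := B3 m (by omega)
  exact ⟨by omega, by omega, by omega, by omega⟩

lemma bundle_pair (a b c d : ℕ) (h : Bundle c d a b) : Bundle a b c d := by
  obtain ⟨B1, B2, B3⟩ := h
  have eH1 : cbHi c d a b = cbHi a b c d := cbHi_pair a b c d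
  have eL1 : cbLo c d a b = cbLo a b c d := cbLo_pair a b c d
  have eC1 : cbCnt c d a b = cbCnt a b c d := cbCnt_congr eH1 eL1
  have eH2 : cbHi c a d b = cbHi a c b d := by
    rw [cbHi_swapL a c d b, cbHi_swapR a c b d]
  have eL2 : cbLo c a d b = cbLo a c b d := by
    rw [cbLo_swapL a c d b, cbLo_swapR a c b d]
  have eC2 : cbCnt c a d b = cbCnt a c b d := cbCnt_congr eH2 eL2
  have eH3 : cbHi c b d a = cbHi a d b c := by
    rw [cbHi_pair d a c b, cbHi_swapL a d c b, cbHi_swapR a d b c]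
  have eL3 : cbLo c b d a = cbLo a d b c := by
    rw [cbLo_pair d a c b, cbLo_swapL a d c b, cbLo_swapR a d b c]
  have eC3 : cbCnt c b d a = cbCnt a d b c := cbCnt_congr eH3 eL3
  refine ⟨by omega, by omega, fun m hm => ?_⟩
  obtain ⟨f1, f2, f3, f4⟩ := B3 m (by omega)
  exact ⟨by omega, by omega, by omega, by omega⟩

lemma bundle_mid (a b c d : ℕ) (h : Bundle a c b d) : Bundle a b c d := by
  obtain ⟨B1, B2, B3⟩ := h
  have eH3 : cbHi a d c b = cbHi a d b c := cbHi_swapR a d b c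
  have eL3 : cbLo a d c b = cbLo a d b c := cbLo_swapR a d b c
  have eC3 : cbCnt a d c b = cbCnt a d b c := cbCnt_congr eH3 eL3
  refine ⟨by omega, by omega, fun m hm => ?_⟩
  obtain ⟨f1, f2, f3, f4⟩ := B3 m (by omega)
  exact ⟨by omega, by omega, by omega, by omega⟩

lemma bundle_acdb (a b c d : ℕ) (h : Bundle a c d b) : Bundle a b c d := by
  obtain ⟨B1, B2, B3⟩ := h
  have eH1 : cbHi a c d b = cbHi a c b d := cbHi_swapR a c b d
  have eL1 : cbLo a c d b = cbLo a c b d := cbLo_swapR a c b d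
  have eC1 : cbCnt a c d b = cbCnt a c b d := cbCnt_congr eH1 eL1
  have eH2 : cbHi a d c b = cbHi a d b c := cbHi_swapR a d b c
  have eL2 : cbLo a d c b = cbLo a d b c := cbLo_swapR a d b c
  have eC2 : cbCnt a d c b = cbCnt a d b c := cbCnt_congr eH2 eL2
  refine ⟨by omega, by omega, fun m hm => ?_⟩
  obtain ⟨f1, f2, f3, f4⟩ := B3 m (by omega)
  exact ⟨by omega, by omega, by omega, by omega⟩

lemma bundle₃ (a b c d : ℕ) (hab : a ≤ b) (hcd : c ≤ d) (hac : a ≤ c)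
    (hev : (a + b + c + d) % 2 = 0) : Bundle a b c d := by
  rcases le_total b c with h | h
  · exact bundle_core a b c d hab h hcd hev
  · rcases le_total b d with h' | h'
    · exact bundle_mid a b c d (bundle_core a c b d hac h h' (by omega))
    · exact bundle_acdb a b c d (bundle_core a c d b hac hcd h' (by omega))

lemma bundle₂ (a b c d : ℕ) (hab : a ≤ b) (hcd : c ≤ d)
    (hev : (a + b + c + d) % 2 = 0) : Bundle a b c d := by
  rcases le_total a c with h | h
  · exact bundle₃ a b c d hab hcd h hev
  · exact bundle_pair a b c d (bundle₃ c d a b hcd hab h (by omega))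

lemma bundle₁ (a b c d : ℕ) (hab : a ≤ b)
    (hev : (a + b + c + d) % 2 = 0) : Bundle a b c d := by
  rcases le_total c d with h | h
  · exact bundle₂ a b c d hab h hev
  · exact bundle_swapR a b c d (bundle₂ a b d c hab h (by omega))

lemma bundle_all (a b c d : ℕ) (hev : (a + b + c + d) % 2 = 0) : Bundle a b c d := by
  rcases le_total a b with h | h
  · exact bundle₁ a b c d h hev
  · exact bundle_swapL a b c d (bundle₁ b a c d h (by omega))

lemma slTwoRank_eq (ℓ a b c : ℕ) :
    slTwoRank ℓ a b c = if a ≤ ℓ ∧ b ≤ ℓ ∧ c ≤ ℓ ∧ (a + b + c) % 2 = 0 ∧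
      (a - b) + (b - a) ≤ c ∧ c ≤ a + b ∧ a + b + c ≤ 2 * ℓ then 1 else 0 := by
  rw [slTwoRank]
  refine if_congr ?_ rfl rfl
  rw [Nat.even_iff]
  constructor <;> intro h <;> omega

lemma slTwoRank_rot (ℓ a b c : ℕ) : slTwoRank ℓ a b c = slTwoRank ℓ b c a := by
  rw [slTwoRank_eq, slTwoRank_eq]
  refine if_congr ?_ rfl rfl
  constructor <;> intro h <;> omega

set_option maxHeartbeats 1600000 in
lemma rank_mul (ℓ a b c d μ : ℕ) (ha : a ≤ ℓ) (hb : b ≤ ℓ) (hc : c ≤ ℓ) (hd : d ≤ ℓ)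
    (hev : (a + b + c + d) % 2 = 0) (hle : a + b + c + d ≤ 2 * ℓ) (hμ : μ ≤ ℓ) :
    slTwoRank ℓ a b μ * slTwoRank ℓ c d μ =
      if cbLo a b c d ≤ μ ∧ μ ≤ cbHi a b c d ∧ (a + b + μ) % 2 = 0 then 1 else 0 := by
  rw [slTwoRank_eq, slTwoRank_eq]
  unfold cbLo cbHi
  split_ifs <;> omega

set_option maxHeartbeats 1600000 in
lemma pair_sum (ℓ a b c d : ℕ) (ha : a ≤ ℓ) (hb : b ≤ ℓ) (hc : c ≤ ℓ) (hd : d ≤ ℓ)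
    (hev : (a + b + c + d) % 2 = 0) (hle : a + b + c + d ≤ 2 * ℓ) (f : ℕ → ℚ) :
    ∑ μ ∈ range (ℓ + 1), f μ * ((slTwoRank ℓ a b μ * slTwoRank ℓ c d μ : ℕ) : ℚ)
      = ∑ j ∈ range (cbCnt a b c d), f (cbLo a b c d + 2 * j) := by
  have hstep : ∀ μ ∈ range (ℓ + 1),
      f μ * ((slTwoRank ℓ a b μ * slTwoRank ℓ c d μ : ℕ) : ℚ)
        = if cbLo a b c d ≤ μ ∧ μ ≤ cbHi a b c d ∧ (a + b + μ) % 2 = 0 then f μ else 0 := by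
    intro μ hμ
    rw [rank_mul ℓ a b c d μ ha hb hc hd hev hle (by
      have := mem_range.mp hμ; omega)]
    split_ifs <;> simp
  rw [sum_congr rfl hstep, ← Finset.sum_filter]
  refine sum_nbij' (fun μ => (μ - cbLo a b c d) / 2) (fun j => cbLo a b c d + 2 * j)
    ?_ ?_ ?_ ?_ ?_
  · intro μ hμ
    simp only [mem_filter, mem_range] at *
    unfold cbCnt cbLo cbHi at *
    omega
  · intro j hj
    simp only [mem_filter, mem_range] at *
    unfold cbCnt cbLo cbHi at *
    omega
  · intro μ hμ
    simp only [mem_filter, mem_range] at *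
    unfold cbCnt cbLo cbHi at *
    omega
  · intro j hj
    simp only [mem_filter, mem_range] at *
    unfold cbCnt cbLo cbHi at *
    omega
  · intro μ hμ
    have : cbLo a b c d + 2 * ((μ - cbLo a b c d) / 2) = μ := by
      simp only [mem_filter, mem_range] at *
      unfold cbCnt cbLo cbHi at *
      omega
    rw [this]

lemma casimir_sum (L n : ℕ) :
    ∑ j ∈ range n, casimir (L + 2 * j)
      = (n : ℚ) * casimir L + ((L : ℚ) + 1) * (n : ℚ) * ((n : ℚ) - 1)
        + (n : ℚ) * ((n : ℚ) - 1) * (2 * (n : ℚ) - 1) / 3 := by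
  induction n with
  | zero => simp
  | succ m ih =>
      rw [sum_range_succ, ih]
      simp only [casimir]
      push_cast
      ring

lemma sq_fact (a b c d : ℕ) :
    cbHi a b c d ^ 2 + cbHi a c b d ^ 2 + cbHi a d b c ^ 2 + (a + b + c + d) ^ 2
      = a ^ 2 + b ^ 2 + c ^ 2 + d ^ 2
        + (cbHi a b c d + cbHi a c b d + cbHi a d b c) * (a + b + c + d) := by
  simp only [cbHi, min_def]
  split_ifs <;> ring

set_option maxHeartbeats 1600000 in
theorem stmt_6 (ℓ l₁ l₂ l₃ l₄ : ℕ)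
    (h₁ : l₁ ≤ ℓ) (h₂ : l₂ ≤ ℓ) (h₃ : l₃ ≤ ℓ) (h₄ : l₄ ≤ ℓ)
    (hev : Even (l₁ + l₂ + l₃ + l₄)) (hle : l₁ + l₂ + l₃ + l₄ ≤ 2 * ℓ) :
    ((∑ μ ∈ Finset.range (ℓ + 1),
        slTwoRank ℓ l₁ l₂ μ * slTwoRank ℓ μ l₃ l₄ : ℕ) : ℚ) *
        (casimir l₁ + casimir l₂ + casimir l₃ + casimir l₄) =
      ∑ μ ∈ Finset.range (ℓ + 1), casimir μ *
        ((slTwoRank ℓ l₁ l₂ μ * slTwoRank ℓ l₃ l₄ μ +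
          slTwoRank ℓ l₁ l₃ μ * slTwoRank ℓ l₂ l₄ μ +
          slTwoRank ℓ l₁ l₄ μ * slTwoRank ℓ l₂ l₃ μ : ℕ) : ℚ) := by
  have hev' : (l₁ + l₂ + l₃ + l₄) % 2 = 0 := Nat.even_iff.mp hev
  have hrot : ∀ μ, slTwoRank ℓ μ l₃ l₄ = slTwoRank ℓ l₃ l₄ μ := fun μ => slTwoRank_rot ℓ μ l₃ l₄
  simp only [hrot]
  -- left-hand side count
  have hL : ((∑ μ ∈ Finset.range (ℓ + 1),
      slTwoRank ℓ l₁ l₂ μ * slTwoRank ℓ l₃ l₄ μ : ℕ) : ℚ) = (cbCnt l₁ l₂ l₃ l₄ : ℚ) := by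
    have h := pair_sum ℓ l₁ l₂ l₃ l₄ h₁ h₂ h₃ h₄ hev' hle (fun _ => (1 : ℚ))
    simp only [one_mul] at h
    push_cast at h ⊢
    rw [h]
    simp
  rw [hL]
  -- split the right-hand side into three sums
  have hsplit : ∀ μ, casimir μ *
      ((slTwoRank ℓ l₁ l₂ μ * slTwoRank ℓ l₃ l₄ μ +
        slTwoRank ℓ l₁ l₃ μ * slTwoRank ℓ l₂ l₄ μ +
        slTwoRank ℓ l₁ l₄ μ * slTwoRank ℓ l₂ l₃ μ : ℕ) : ℚ)
      = casimir μ * ((slTwoRank ℓ l₁ l₂ μ * slTwoRank ℓ l₃ l₄ μ : ℕ) : ℚ)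
        + casimir μ * ((slTwoRank ℓ l₁ l₃ μ * slTwoRank ℓ l₂ l₄ μ : ℕ) : ℚ)
        + casimir μ * ((slTwoRank ℓ l₁ l₄ μ * slTwoRank ℓ l₂ l₃ μ : ℕ) : ℚ) := by
    intro μ; push_cast; ring
  simp only [hsplit, Finset.sum_add_distrib]
  rw [pair_sum ℓ l₁ l₂ l₃ l₄ h₁ h₂ h₃ h₄ hev' hle casimir,
      pair_sum ℓ l₁ l₃ l₂ l₄ h₁ h₃ h₂ h₄ (by omega) (by omega) casimir,
      pair_sum ℓ l₁ l₄ l₂ l₃ h₁ h₄ h₂ h₃ (by omega) (by omega) casimir,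
      casimir_sum, casimir_sum, casimir_sum]
  obtain ⟨B1, B2, B3⟩ := bundle_all l₁ l₂ l₃ l₄ hev'
  rw [← B1, ← B2]
  rcases Nat.eq_zero_or_pos (cbCnt l₁ l₂ l₃ l₄) with h0 | hpos
  · rw [h0]; norm_num
  · obtain ⟨m, hm⟩ : ∃ m, cbCnt l₁ l₂ l₃ l₄ = m + 1 := ⟨cbCnt l₁ l₂ l₃ l₄ - 1, by omega⟩
    obtain ⟨e1, e2, e3, eS⟩ := B3 m hm
    have q1 : (cbLo l₁ l₂ l₃ l₄ : ℚ) = (cbHi l₁ l₂ l₃ l₄ : ℚ) - 2 * m := by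
      rw [e1]; push_cast; ring
    have q2 : (cbLo l₁ l₃ l₂ l₄ : ℚ) = (cbHi l₁ l₃ l₂ l₄ : ℚ) - 2 * m := by
      rw [e2]; push_cast; ring
    have q3 : (cbLo l₁ l₄ l₂ l₃ : ℚ) = (cbHi l₁ l₄ l₂ l₃ : ℚ) - 2 * m := by
      rw [e3]; push_cast; ring
    have qS : (cbHi l₁ l₂ l₃ l₄ : ℚ) + (cbHi l₁ l₃ l₂ l₄ : ℚ) + (cbHi l₁ l₄ l₂ l₃ : ℚ)
        = (l₁ : ℚ) + l₂ + l₃ + l₄ + 2 * m := by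
      exact_mod_cast congrArg (Nat.cast : ℕ → ℚ) eS
    have qsq : (cbHi l₁ l₂ l₃ l₄ : ℚ) ^ 2 + (cbHi l₁ l₃ l₂ l₄ : ℚ) ^ 2
          + (cbHi l₁ l₄ l₂ l₃ : ℚ) ^ 2 + ((l₁ : ℚ) + l₂ + l₃ + l₄) ^ 2
        = (l₁ : ℚ) ^ 2 + (l₂ : ℚ) ^ 2 + (l₃ : ℚ) ^ 2 + (l₄ : ℚ) ^ 2
          + ((cbHi l₁ l₂ l₃ l₄ : ℚ) + (cbHi l₁ l₃ l₂ l₄ : ℚ) + (cbHi l₁ l₄ l₂ l₃ : ℚ))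
            * ((l₁ : ℚ) + l₂ + l₃ + l₄) := by
      exact_mod_cast congrArg (Nat.cast : ℕ → ℚ) (sq_fact l₁ l₂ l₃ l₄)
    have e3' : (cbHi l₁ l₄ l₂ l₃ : ℚ)
        = (l₁ : ℚ) + l₂ + l₃ + l₄ + 2 * m - (cbHi l₁ l₂ l₃ l₄ : ℚ)
          - (cbHi l₁ l₃ l₂ l₄ : ℚ) := by linarith
    rw [e3'] at qsq
    simp only [casimir]
    rw [hm, q1, q2, q3, e3']
    push_cast
    linear_combination (-(((m : ℚ) + 1)) / 2) * qsq
end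

section
/- Let m ≥ 2, let c(x) = x·(m-x)·(m+1)/m as a rational-valued function on {0,…,m-1}, and define N(i,j,k) = 1 if i+j+k ≡ 0 (mod m), else 0, for i,j,k ∈ {0,…,m-1}. For i ≤ j ≤ k ≤ l in {1,…,m-1}, let Deg = (1/(2(m+1)))·[ r·(c(i)+c(j)+c(k)+c(l)) − ∑_{μ=0}^{m-1} c(μ)·( N(i,j,(m-μ) mod m)·N(k,l,μ) + N(i,k,(m-μ) mod m)·N(j,l,μ) + N(i,l,(m-μ) mod m)·N(j,k,μ) ) ], where r = ∑_{μ=0}^{m-1} N(i,j,(m-μ) mod m)·N(μ,k,l). Then Deg = i if i+j+k+l = 2m and j+k ≥ i+l; Deg = m−l if i+j+k+l = 2m and j+k ≤ i+l; and Deg = 0 otherwise (i.e., when i+j+k+l is not equal to 2m, noting i+j+k+l ≡ 0 mod m is required for r ≠ 0). -/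
open Finset

/-- The rank of the 3-point level-1 conformal block for `sl_m` with weights
`(ϖ_i, ϖ_j, ϖ_k)` (with `ϖ_0 := 0`). -/
def slmRank (m i j k : ℕ) : ℕ := if (i + j + k) % m = 0 then 1 else 0

/-- The normalized Casimir eigenvalue `c(ϖ_x) = x(m-x)(m+1)/m` for `sl_m`. -/
def slmCasimir (m x : ℕ) : ℚ := (x : ℚ) * ((m : ℚ) - (x : ℚ)) * ((m : ℚ) + 1) / (m : ℚ)

/-- The degree on `M̄₀,₄` of the determinant of the level-1 `sl_m` conformal
block bundle with weights `(ϖ_i, ϖ_j, ϖ_k, ϖ_l)`. -/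
def slmDeg (m i j k l : ℕ) : ℚ :=
  (1 / (2 * ((m : ℚ) + 1))) *
    (((∑ μ ∈ Finset.range m, slmRank m i j ((m - μ) % m) * slmRank m μ k l : ℕ) : ℚ) *
        (slmCasimir m i + slmCasimir m j + slmCasimir m k + slmCasimir m l) -
      ∑ μ ∈ Finset.range m, slmCasimir m μ *
        ((slmRank m i j ((m - μ) % m) * slmRank m k l μ +
          slmRank m i k ((m - μ) % m) * slmRank m j l μ +
          slmRank m i l ((m - μ) % m) * slmRank m j k μ : ℕ) : ℚ))

lemma slm_mod_iff (m x : ℕ) [NeZero m] : x % m = 0 ↔ (x : ZMod m) = 0 := by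
  rw [ZMod.natCast_eq_zero_iff, Nat.dvd_iff_mod_eq_zero]

lemma rank_left (m a b μ : ℕ) (hm : 0 < m) (hμ : μ < m) :
    slmRank m a b ((m - μ) % m) = if (a + b) % m = μ then 1 else 0 := by
  haveI : NeZero m := ⟨hm.ne'⟩
  have key : (a + b + (m - μ) % m) % m = 0 ↔ (a + b) % m = μ := by
    rw [slm_mod_iff]
    have hc : ((a + b + (m - μ) % m : ℕ) : ZMod m) = (a : ZMod m) + b - μ := by
      push_cast [ZMod.natCast_mod]
      rw [Nat.cast_sub hμ.le, ZMod.natCast_self]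
      ring
    rw [hc, sub_eq_zero]
    constructor
    · intro h
      have h2 : ((a + b : ℕ) : ZMod m) = ((μ : ℕ) : ZMod m) := by push_cast; exact h
      rw [ZMod.natCast_eq_natCast_iff] at h2
      rwa [Nat.ModEq, Nat.mod_eq_of_lt hμ] at h2
    · intro h
      have h2 : (a + b) ≡ μ [MOD m] := by rw [Nat.ModEq, Nat.mod_eq_of_lt hμ]; exact h
      have h3 := (ZMod.natCast_eq_natCast_iff _ _ _).mpr h2
      push_cast at h3
      exact h3
  rw [slmRank, if_congr key rfl rfl]

lemma rank_mod (m c d p : ℕ) : slmRank m c d (p % m) = if (c + d + p) % m = 0 then 1 else 0 := by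
  rw [slmRank, Nat.add_mod_mod]

lemma sum_rank_eq (m i j k l : ℕ) (hm : 0 < m) :
    (∑ μ ∈ range m, slmRank m i j ((m - μ) % m) * slmRank m μ k l)
      = if (i + j + k + l) % m = 0 then 1 else 0 := by
  have step : ∀ μ ∈ range m, slmRank m i j ((m - μ) % m) * slmRank m μ k l
      = if (i + j) % m = μ then slmRank m μ k l else 0 := by
    intro μ hμ
    rw [rank_left m i j μ hm (mem_range.mp hμ), ite_mul, one_mul, zero_mul]
  rw [Finset.sum_congr rfl step, Finset.sum_ite_eq,
    if_pos (mem_range.mpr (Nat.mod_lt _ hm))]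
  rw [slmRank]
  have h : ((i + j) % m + k + l) % m = (i + j + k + l) % m := by
    rw [add_assoc, Nat.mod_add_mod, ← add_assoc]
  rw [h]

lemma sum_cas_eq (m a b c d : ℕ) (hm : 0 < m) :
    (∑ μ ∈ range m, slmCasimir m μ * ((slmRank m a b ((m - μ) % m) * slmRank m c d μ : ℕ) : ℚ))
      = if (a + b + c + d) % m = 0 then slmCasimir m ((a + b) % m) else 0 := by
  have step : ∀ μ ∈ range m, slmCasimir m μ * ((slmRank m a b ((m - μ) % m) * slmRank m c d μ : ℕ) : ℚ)
      = if (a + b) % m = μ then slmCasimir m μ * ((slmRank m c d μ : ℕ) : ℚ) else 0 := by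
    intro μ hμ
    rw [rank_left m a b μ hm (mem_range.mp hμ)]
    split_ifs with h
    · push_cast; ring
    · simp
  rw [Finset.sum_congr rfl step, Finset.sum_ite_eq,
    if_pos (mem_range.mpr (Nat.mod_lt _ hm))]
  have hr : slmRank m c d ((a + b) % m) = if (a + b + c + d) % m = 0 then 1 else 0 := by
    rw [slmRank, Nat.add_mod_mod]
    rw [show c + d + (a + b) = a + b + c + d from by ring]
  rw [hr]
  split_ifs <;> simp

lemma deg_eq (m i j k l : ℕ) (hm : 0 < m) :
    slmDeg m i j k l =
      if (i + j + k + l) % m = 0 then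
        (1 / (2 * ((m : ℚ) + 1))) *
          ((slmCasimir m i + slmCasimir m j + slmCasimir m k + slmCasimir m l)
            - (slmCasimir m ((i + j) % m) + slmCasimir m ((i + k) % m)
               + slmCasimir m ((i + l) % m)))
      else 0 := by
  have hsplit : (∑ μ ∈ range m, slmCasimir m μ *
        ((slmRank m i j ((m - μ) % m) * slmRank m k l μ +
          slmRank m i k ((m - μ) % m) * slmRank m j l μ +
          slmRank m i l ((m - μ) % m) * slmRank m j k μ : ℕ) : ℚ))
      = (∑ μ ∈ range m, slmCasimir m μ * ((slmRank m i j ((m - μ) % m) * slmRank m k l μ : ℕ) : ℚ))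
        + (∑ μ ∈ range m, slmCasimir m μ * ((slmRank m i k ((m - μ) % m) * slmRank m j l μ : ℕ) : ℚ))
        + (∑ μ ∈ range m, slmCasimir m μ * ((slmRank m i l ((m - μ) % m) * slmRank m j k μ : ℕ) : ℚ)) := by
    rw [← Finset.sum_add_distrib, ← Finset.sum_add_distrib]
    refine Finset.sum_congr rfl fun μ _ => ?_
    push_cast; ring
  rw [slmDeg, hsplit, sum_rank_eq m i j k l hm,
    sum_cas_eq m i j k l hm, sum_cas_eq m i k j l hm, sum_cas_eq m i l j k hm,
    show i + k + j + l = i + j + k + l by ring,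
    show i + l + j + k = i + j + k + l by ring]
  split_ifs with h
  · push_cast; ring
  · push_cast; ring

lemma cas_le (m p : ℕ) (hm : 0 < m) (hp : p ≤ m) :
    slmCasimir m (p % m) = (p : ℚ) * ((m : ℚ) - p) * ((m : ℚ) + 1) / m := by
  rcases eq_or_lt_of_le hp with h | h
  · subst h
    simp [slmCasimir, Nat.mod_self]
  · rw [Nat.mod_eq_of_lt h, slmCasimir]

lemma cas_ge (m p : ℕ) (hm : 0 < m) (h1 : m ≤ p) (h2 : p ≤ 2 * m) :
    slmCasimir m (p % m) = ((p : ℚ) - m) * (2 * (m : ℚ) - p) * ((m : ℚ) + 1) / m := by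
  rw [Nat.mod_eq_sub_mod h1, cas_le m (p - m) hm (by omega), Nat.cast_sub h1]
  ring

theorem stmt_13 (m i j k l : ℕ) (hm : 2 ≤ m)
    (h1 : 1 ≤ i) (hij : i ≤ j) (hjk : j ≤ k) (hkl : k ≤ l) (hl : l ≤ m - 1) :
    (i + j + k + l = 2 * m → i + l ≤ j + k → slmDeg m i j k l = (i : ℚ)) ∧
    (i + j + k + l = 2 * m → j + k ≤ i + l → slmDeg m i j k l = (m : ℚ) - (l : ℚ)) ∧
    (i + j + k + l ≠ 2 * m → slmDeg m i j k l = 0) := by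
  have hm0 : 0 < m := by omega
  have hlm : l < m := by omega
  have hmq : (m : ℚ) ≠ 0 := Nat.cast_ne_zero.mpr hm0.ne'
  have hmq1 : (m : ℚ) + 1 ≠ 0 := by positivity
  refine ⟨?_, ?_, ?_⟩
  · intro hs hle
    have hmod : (i + j + k + l) % m = 0 := by rw [hs]; simp [Nat.mul_mod_right]
    rw [deg_eq m i j k l hm0, if_pos hmod,
      cas_le m (i + j) hm0 (by omega), cas_le m (i + k) hm0 (by omega),
      cas_le m (i + l) hm0 (by omega)]
    simp only [slmCasimir]
    have hq : (i : ℚ) + j + k + l = 2 * m := by exact_mod_cast hs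
    push_cast
    rw [show (l : ℚ) = 2 * m - i - j - k by linarith]
    field_simp
    ring
  · intro hs hge
    have hmod : (i + j + k + l) % m = 0 := by rw [hs]; simp [Nat.mul_mod_right]
    rw [deg_eq m i j k l hm0, if_pos hmod,
      cas_le m (i + j) hm0 (by omega), cas_le m (i + k) hm0 (by omega),
      cas_ge m (i + l) hm0 (by omega) (by omega)]
    simp only [slmCasimir]
    have hq : (i : ℚ) + j + k + l = 2 * m := by exact_mod_cast hs
    push_cast
    rw [show (l : ℚ) = 2 * m - i - j - k by linarith]
    field_simp
    ring
  · intro hne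
    by_cases hmod : (i + j + k + l) % m = 0
    · obtain ⟨q, hq⟩ := Nat.dvd_of_mod_eq_zero hmod
      have hq3 : q ≤ 3 := by
        by_contra hh
        push_neg at hh
        have h4 : m * 4 ≤ m * q := Nat.mul_le_mul_left m (by omega)
        omega
      have hcase : q = 1 ∨ q = 3 := by interval_cases q <;> omega
      rcases hcase with rfl | rfl
      · have hs : i + j + k + l = m := by omega
        rw [deg_eq m i j k l hm0, if_pos hmod,
          cas_le m (i + j) hm0 (by omega), cas_le m (i + k) hm0 (by omega),
          cas_le m (i + l) hm0 (by omega)]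
        simp only [slmCasimir]
        have hq' : (i : ℚ) + j + k + l = m := by exact_mod_cast hs
        push_cast
        rw [show (l : ℚ) = m - i - j - k by linarith]
        field_simp
        ring
      · have hs : i + j + k + l = 3 * m := by omega
        rw [deg_eq m i j k l hm0, if_pos hmod,
          cas_ge m (i + j) hm0 (by omega) (by omega),
          cas_ge m (i + k) hm0 (by omega) (by omega),
          cas_ge m (i + l) hm0 (by omega) (by omega)]
        simp only [slmCasimir]
        have hq' : (i : ℚ) + j + k + l = 3 * m := by exact_mod_cast hs
        push_cast
        rw [show (l : ℚ) = 3 * m - i - j - k by linarith]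
        field_simp
        ring
    · rw [deg_eq m i j k l hm0, if_neg hmod]
end
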